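/- Partition-of-unity energy estimate (Lemma 2): Let ω ⊆ ℝ^d be a measurable set, let κ : ℝ^d × ℝ^d → ℝ^d satisfy κ(x,0) = 0 and the Lipschitz condition |κ(x,z) − κ(x,v)| ≤ C₁ κ̄(x)|z − v| (κ̄ ≥ 0, C₁ > 0). Let χ : ℝ^d → ℝ be differentiable with |χ(x)| ≤ 1 for all x, and let κ̃ : ℝ^d → ℝ be a nonnegative measurable weight with κ̄(x)|∇χ(x)|² ≤ κ̃(x) for all x ∈ ω. If u, v : ℝ^d → ℝ are differentiable and all relevant integrands are integrable on ω, then |∫_ω κ(x,∇u(x))·∇(χ v)(x) dx| ≤ C₁ ‖u‖_{a(ω)} (‖v‖_{a(ω)} + ‖v‖_{s(ω)}), where ‖u‖_{a(ω)} = (∫_ω κ̄ |∇u|²)^{1/2} and ‖v‖_{s(ω)} = (∫_ω κ̃ v²)^{1/2}. -/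

import Mathlib

open MeasureTheory

theorem cs_integral {α : Type*} [MeasurableSpace α] (μ : Measure α) (f g : α → ℝ)
    (hf : ∀ x, 0 ≤ f x) (hg : ∀ x, 0 ≤ g x)
    (hfm : AEStronglyMeasurable f μ) (hgm : AEStronglyMeasurable g μ)
    (hf2 : Integrable (fun x => f x ^ 2) μ) (hg2 : Integrable (fun x => g x ^ 2) μ) :
    ∫ x, f x * g x ∂μ ≤ Real.sqrt (∫ x, f x ^ 2 ∂μ) * Real.sqrt (∫ x, g x ^ 2 ∂μ) := by
  have hpq : (2 : ℝ).HolderConjugate 2 := Real.HolderConjugate.two_two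
  have hfL : MemLp f 2 μ := (memLp_two_iff_integrable_sq hfm).2 hf2
  have hgL : MemLp g 2 μ := (memLp_two_iff_integrable_sq hgm).2 hg2
  have h := integral_mul_le_Lp_mul_Lq_of_nonneg hpq
    (Filter.Eventually.of_forall hf) (Filter.Eventually.of_forall hg)
    (by simpa [ENNReal.ofReal_ofNat] using hfL) (by simpa [ENNReal.ofReal_ofNat] using hgL)
  calc ∫ x, f x * g x ∂μ
      ≤ (∫ a, f a ^ (2:ℝ) ∂μ) ^ (1/2 : ℝ) * (∫ a, g a ^ (2:ℝ) ∂μ) ^ (1/2 : ℝ) := h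
    _ = Real.sqrt (∫ x, f x ^ 2 ∂μ) * Real.sqrt (∫ x, g x ^ 2 ∂μ) := by
        rw [Real.sqrt_eq_rpow, Real.sqrt_eq_rpow]
        norm_num [Real.rpow_natCast]

theorem mul_integrable_of_sq {α : Type*} [MeasurableSpace α] {μ : Measure α} {f g : α → ℝ}
    (hfm : AEStronglyMeasurable f μ) (hgm : AEStronglyMeasurable g μ)
    (hf2 : Integrable (fun x => f x ^ 2) μ) (hg2 : Integrable (fun x => g x ^ 2) μ) :
    Integrable (fun x => f x * g x) μ := by
  refine Integrable.mono' ((hf2.add hg2).div_const 2) (hfm.mul hgm)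
    (Filter.Eventually.of_forall fun x => ?_)
  simp only [Pi.add_apply]
  rw [Real.norm_eq_abs, abs_mul]
  nlinarith [sq_nonneg (|f x| - |g x|), sq_abs (f x), sq_abs (g x), abs_nonneg (f x), abs_nonneg (g x)]

/-- Partition-of-unity energy estimate (Lemma 2):
`|∫_ω κ(x,∇u)·∇(χ v)| ≤ C₁ ‖u‖_{a(ω)} (‖v‖_{a(ω)} + ‖v‖_{s(ω)})`. -/
theorem partition_of_unity_energy_estimate
    {d : ℕ} (ω : Set (EuclideanSpace ℝ (Fin d))) (hω : MeasurableSet ω)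
    (κ : EuclideanSpace ℝ (Fin d) → EuclideanSpace ℝ (Fin d) → EuclideanSpace ℝ (Fin d))
    (hκ0 : ∀ x, κ x 0 = 0)
    (κbar : EuclideanSpace ℝ (Fin d) → ℝ) (hκbar : ∀ x, 0 ≤ κbar x)
    (C₁ : ℝ) (hC₁ : 0 < C₁)
    (hlip : ∀ x z v, ‖κ x z - κ x v‖ ≤ C₁ * (κbar x * ‖z - v‖))
    (χ : EuclideanSpace ℝ (Fin d) → ℝ) (hχ : Differentiable ℝ χ)
    (hχ_bdd : ∀ x, |χ x| ≤ 1)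
    (κtilde : EuclideanSpace ℝ (Fin d) → ℝ)
    (hκtilde_meas : Measurable κtilde) (hκtilde : ∀ x, 0 ≤ κtilde x)
    (hdom : ∀ x ∈ ω, κbar x * ‖gradient χ x‖ ^ 2 ≤ κtilde x)
    (u v : EuclideanSpace ℝ (Fin d) → ℝ)
    (hu : Differentiable ℝ u) (hv : Differentiable ℝ v)
    (hint1 : IntegrableOn
      (fun x => (inner ℝ (κ x (gradient u x)) (gradient (fun y => χ y * v y) x) : ℝ)) ω)
    (hint2 : IntegrableOn (fun x => v x * (inner ℝ (κ x (gradient u x)) (gradient χ x) : ℝ)) ω)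
    (hint3 : IntegrableOn (fun x => χ x * (inner ℝ (κ x (gradient u x)) (gradient v x) : ℝ)) ω)
    (hint4 : IntegrableOn (fun x => κbar x * ‖gradient u x‖ ^ 2) ω)
    (hint5 : IntegrableOn (fun x => κbar x * ‖gradient v x‖ ^ 2) ω)
    (hint6 : IntegrableOn (fun x => κtilde x * v x ^ 2) ω) :
    |∫ x in ω, (inner ℝ (κ x (gradient u x)) (gradient (fun y => χ y * v y) x) : ℝ)|
      ≤ C₁ * Real.sqrt (∫ x in ω, κbar x * ‖gradient u x‖ ^ 2)
          * (Real.sqrt (∫ x in ω, κbar x * ‖gradient v x‖ ^ 2)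
              + Real.sqrt (∫ x in ω, κtilde x * v x ^ 2)) := by
  classical
  set μ := (volume : Measure (EuclideanSpace ℝ (Fin d))).restrict ω with hμ
  set K := fun x => κ x (gradient u x) with hK
  -- bound on ‖K x‖
  have hKb : ∀ x, ‖K x‖ ≤ C₁ * (κbar x * ‖gradient u x‖) := fun x => by
    simpa [hK, hκ0 x] using hlip x (gradient u x) 0
  -- product rule for gradient
  have hgrad : ∀ x, gradient (fun y => χ y * v y) x
      = χ x • gradient v x + v x • gradient χ x := by
    intro x
    have h : fderiv ℝ (fun y => χ y * v y) x = χ x • fderiv ℝ v x + v x • fderiv ℝ χ x :=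
      ((hχ x).hasFDerivAt.mul (hv x).hasFDerivAt).fderiv
    simp only [gradient, h, map_add, _root_.map_smul]
  -- pointwise identity for the integrand
  have hpt : ∀ x, (inner ℝ (K x) (gradient (fun y => χ y * v y) x) : ℝ)
      = χ x * (inner ℝ (K x) (gradient v x) : ℝ) + v x * (inner ℝ (K x) (gradient χ x) : ℝ) := by
    intro x
    rw [hgrad x, inner_add_right, real_inner_smul_right, real_inner_smul_right]
  -- the three auxiliary nonnegative functions
  set f := fun x => Real.sqrt (κbar x * ‖gradient u x‖ ^ 2) with hf
  set g := fun x => Real.sqrt (κbar x * ‖gradient v x‖ ^ 2) with hg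
  set h := fun x => Real.sqrt (κtilde x * v x ^ 2) with hh
  have hf0 : ∀ x, 0 ≤ f x := fun x => Real.sqrt_nonneg _
  have hg0 : ∀ x, 0 ≤ g x := fun x => Real.sqrt_nonneg _
  have hh0 : ∀ x, 0 ≤ h x := fun x => Real.sqrt_nonneg _
  have hfm : AEStronglyMeasurable f μ :=
    Real.continuous_sqrt.comp_aestronglyMeasurable hint4.aestronglyMeasurable
  have hgm : AEStronglyMeasurable g μ :=
    Real.continuous_sqrt.comp_aestronglyMeasurable hint5.aestronglyMeasurable
  have hhm : AEStronglyMeasurable h μ :=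
    Real.continuous_sqrt.comp_aestronglyMeasurable hint6.aestronglyMeasurable
  have hf2 : Integrable (fun x => f x ^ 2) μ :=
    hint4.congr (Filter.Eventually.of_forall fun x =>
      (Real.sq_sqrt (mul_nonneg (hκbar x) (sq_nonneg _))).symm)
  have hg2 : Integrable (fun x => g x ^ 2) μ :=
    hint5.congr (Filter.Eventually.of_forall fun x =>
      (Real.sq_sqrt (mul_nonneg (hκbar x) (sq_nonneg _))).symm)
  have hh2 : Integrable (fun x => h x ^ 2) μ :=
    hint6.congr (Filter.Eventually.of_forall fun x =>
      (Real.sq_sqrt (mul_nonneg (hκtilde x) (sq_nonneg _))).symm)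
  have hfg_int : Integrable (fun x => f x * g x) μ := mul_integrable_of_sq hfm hgm hf2 hg2
  have hfh_int : Integrable (fun x => f x * h x) μ := mul_integrable_of_sq hfm hhm hf2 hh2
  -- key product identity : f x * g x = κbar ‖∇u‖ ‖∇v‖
  have hfg : ∀ x, f x * g x = κbar x * (‖gradient u x‖ * ‖gradient v x‖) := by
    intro x
    rw [hf, hg, ← Real.sqrt_mul (mul_nonneg (hκbar x) (sq_nonneg _))]
    rw [show κbar x * ‖gradient u x‖ ^ 2 * (κbar x * ‖gradient v x‖ ^ 2)
        = (κbar x * (‖gradient u x‖ * ‖gradient v x‖)) ^ 2 by ring]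
    exact Real.sqrt_sq (mul_nonneg (hκbar x) (mul_nonneg (norm_nonneg _) (norm_nonneg _)))
  -- pointwise bound for the χ∇v term
  have hb3 : ∀ x, |χ x * (inner ℝ (K x) (gradient v x) : ℝ)| ≤ C₁ * (f x * g x) := by
    intro x
    rw [abs_mul, hfg x]
    calc |χ x| * |(inner ℝ (K x) (gradient v x) : ℝ)|
        ≤ 1 * (‖K x‖ * ‖gradient v x‖) :=
          mul_le_mul (hχ_bdd x) (abs_real_inner_le_norm _ _) (abs_nonneg _) zero_le_one
      _ = ‖K x‖ * ‖gradient v x‖ := one_mul _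
      _ ≤ (C₁ * (κbar x * ‖gradient u x‖)) * ‖gradient v x‖ :=
          mul_le_mul_of_nonneg_right (hKb x) (norm_nonneg _)
      _ = C₁ * (κbar x * (‖gradient u x‖ * ‖gradient v x‖)) := by ring
  -- pointwise bound for the v∇χ term, valid on ω
  have hb2 : ∀ x ∈ ω, |v x * (inner ℝ (K x) (gradient χ x) : ℝ)| ≤ C₁ * (f x * h x) := by
    intro x hx
    have hfh' : f x * Real.sqrt (κbar x * ‖gradient χ x‖ ^ 2 * v x ^ 2)
        = κbar x * (‖gradient u x‖ * (‖gradient χ x‖ * |v x|)) := by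
      rw [hf, ← Real.sqrt_mul (mul_nonneg (hκbar x) (sq_nonneg _))]
      rw [show κbar x * ‖gradient u x‖ ^ 2 * (κbar x * ‖gradient χ x‖ ^ 2 * v x ^ 2)
          = (κbar x * (‖gradient u x‖ * (‖gradient χ x‖ * |v x|))) ^ 2 by
        rw [← sq_abs (v x)]; ring]
      exact Real.sqrt_sq (mul_nonneg (hκbar x)
        (mul_nonneg (norm_nonneg _) (mul_nonneg (norm_nonneg _) (abs_nonneg _))))
    have hmono : Real.sqrt (κbar x * ‖gradient χ x‖ ^ 2 * v x ^ 2) ≤ h x := by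
      apply Real.sqrt_le_sqrt
      exact mul_le_mul_of_nonneg_right (hdom x hx) (sq_nonneg _)
    calc |v x * (inner ℝ (K x) (gradient χ x) : ℝ)|
        ≤ |v x| * (‖K x‖ * ‖gradient χ x‖) := by
          rw [abs_mul]
          exact mul_le_mul_of_nonneg_left (abs_real_inner_le_norm _ _) (abs_nonneg _)
      _ ≤ |v x| * ((C₁ * (κbar x * ‖gradient u x‖)) * ‖gradient χ x‖) :=
          mul_le_mul_of_nonneg_left
            (mul_le_mul_of_nonneg_right (hKb x) (norm_nonneg _)) (abs_nonneg _)
      _ = C₁ * (κbar x * (‖gradient u x‖ * (‖gradient χ x‖ * |v x|))) := by ring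
      _ = C₁ * (f x * Real.sqrt (κbar x * ‖gradient χ x‖ ^ 2 * v x ^ 2)) := by rw [hfh']
      _ ≤ C₁ * (f x * h x) := by
          exact mul_le_mul_of_nonneg_left
            (mul_le_mul_of_nonneg_left hmono (hf0 x)) hC₁.le
  -- split the integral
  have hsplit : (∫ x in ω, (inner ℝ (K x) (gradient (fun y => χ y * v y) x) : ℝ))
      = (∫ x in ω, χ x * (inner ℝ (K x) (gradient v x) : ℝ))
        + ∫ x in ω, v x * (inner ℝ (K x) (gradient χ x) : ℝ) := by
    rw [← integral_add hint3 hint2]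
    exact integral_congr_ae (Filter.Eventually.of_forall fun x => hpt x)
  have hA0 : 0 ≤ ∫ x, f x ^ 2 ∂μ := integral_nonneg fun x => sq_nonneg _
  -- bound each piece
  have hI3 : |∫ x in ω, χ x * (inner ℝ (K x) (gradient v x) : ℝ)|
      ≤ C₁ * (Real.sqrt (∫ x, f x ^ 2 ∂μ) * Real.sqrt (∫ x, g x ^ 2 ∂μ)) := by
    calc |∫ x in ω, χ x * (inner ℝ (K x) (gradient v x) : ℝ)|
        ≤ ∫ x in ω, |χ x * (inner ℝ (K x) (gradient v x) : ℝ)| := by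
          simpa only [Real.norm_eq_abs] using
            norm_integral_le_integral_norm (μ := μ) fun x => χ x * (inner ℝ (K x) (gradient v x) : ℝ)
      _ ≤ ∫ x, C₁ * (f x * g x) ∂μ := by
          refine integral_mono hint3.abs (hfg_int.const_mul C₁)
            fun x => hb3 x
      _ = C₁ * ∫ x, f x * g x ∂μ := integral_const_mul _ _
      _ ≤ C₁ * (Real.sqrt (∫ x, f x ^ 2 ∂μ) * Real.sqrt (∫ x, g x ^ 2 ∂μ)) :=
          mul_le_mul_of_nonneg_left
            (cs_integral μ f g hf0 hg0 hfm hgm hf2 hg2) hC₁.le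
  have hI2 : |∫ x in ω, v x * (inner ℝ (K x) (gradient χ x) : ℝ)|
      ≤ C₁ * (Real.sqrt (∫ x, f x ^ 2 ∂μ) * Real.sqrt (∫ x, h x ^ 2 ∂μ)) := by
    calc |∫ x in ω, v x * (inner ℝ (K x) (gradient χ x) : ℝ)|
        ≤ ∫ x in ω, |v x * (inner ℝ (K x) (gradient χ x) : ℝ)| := by
          simpa only [Real.norm_eq_abs] using
            norm_integral_le_integral_norm (μ := μ) fun x => v x * (inner ℝ (K x) (gradient χ x) : ℝ)
      _ ≤ ∫ x, C₁ * (f x * h x) ∂μ := by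
          refine integral_mono_ae hint2.abs (hfh_int.const_mul C₁) ?_
          filter_upwards [ae_restrict_mem hω] with x hx using hb2 x hx
      _ = C₁ * ∫ x, f x * h x ∂μ := integral_const_mul _ _
      _ ≤ C₁ * (Real.sqrt (∫ x, f x ^ 2 ∂μ) * Real.sqrt (∫ x, h x ^ 2 ∂μ)) :=
          mul_le_mul_of_nonneg_left
            (cs_integral μ f h hf0 hh0 hfm hhm hf2 hh2) hC₁.le
  -- rewrite the sqrt integrals
  have hAeq : (∫ x, f x ^ 2 ∂μ) = ∫ x in ω, κbar x * ‖gradient u x‖ ^ 2 :=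
    integral_congr_ae (Filter.Eventually.of_forall fun x =>
      Real.sq_sqrt (mul_nonneg (hκbar x) (sq_nonneg _)))
  have hBeq : (∫ x, g x ^ 2 ∂μ) = ∫ x in ω, κbar x * ‖gradient v x‖ ^ 2 :=
    integral_congr_ae (Filter.Eventually.of_forall fun x =>
      Real.sq_sqrt (mul_nonneg (hκbar x) (sq_nonneg _)))
  have hCeq : (∫ x, h x ^ 2 ∂μ) = ∫ x in ω, κtilde x * v x ^ 2 :=
    integral_congr_ae (Filter.Eventually.of_forall fun x =>
      Real.sq_sqrt (mul_nonneg (hκtilde x) (sq_nonneg _)))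
  calc |∫ x in ω, (inner ℝ (K x) (gradient (fun y => χ y * v y) x) : ℝ)|
      ≤ |∫ x in ω, χ x * (inner ℝ (K x) (gradient v x) : ℝ)|
        + |∫ x in ω, v x * (inner ℝ (K x) (gradient χ x) : ℝ)| := by
        rw [hsplit]; exact abs_add_le _ _
    _ ≤ C₁ * (Real.sqrt (∫ x, f x ^ 2 ∂μ) * Real.sqrt (∫ x, g x ^ 2 ∂μ))
        + C₁ * (Real.sqrt (∫ x, f x ^ 2 ∂μ) * Real.sqrt (∫ x, h x ^ 2 ∂μ)) := add_le_add hI3 hI2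
    _ = C₁ * Real.sqrt (∫ x, f x ^ 2 ∂μ)
        * (Real.sqrt (∫ x, g x ^ 2 ∂μ) + Real.sqrt (∫ x, h x ^ 2 ∂μ)) := by ring
    _ = _ := by rw [hAeq, hBeq, hCeq]
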